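/- arXiv:1409.1141 — 2 statements merged into one kernel-verified Lean document; each statement's English description precedes it below -/
import Mathlib

section
/- Let (R,m,k) be a Noetherian local ring, M and N finitely generated R-modules with N of infinite projective dimension. If Tor_i^R(M,N) = 0 for some i > 0, then k is not a direct summand of any of the syzygy modules M_0, ..., M_{i-1} of M. -/
open CategoryTheory IsLocalRing TensorProduct

variable (R : Type) [CommRing R]

/-- Length of a module, as the Krull dimension of its submodule lattice. -/
noncomputable def len (M : Type) [AddCommGroup M] [Module R M] : ℕ :=
  ((Order.krullDim (Submodule R M)).unbotD 0).toNat

/-- Minimal number of generators. -/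
noncomputable def nu [IsLocalRing R] (M : Type) [AddCommGroup M] [Module R M] : ℕ :=
  len R (M ⧸ (maximalIdeal R • (⊤ : Submodule R M)))

/-- The invariant `γ(M) = λ(M)/ν(M) - 1`. -/
noncomputable def gam [IsLocalRing R] (M : Type) [AddCommGroup M] [Module R M] : ℚ :=
  (len R M : ℚ) / (nu R M) - 1

/-- `Tor_i^R(M, N)`. -/
noncomputable def torM (i : ℕ) (M N : Type) [AddCommGroup M] [Module R M]
    [AddCommGroup N] [Module R N] : ModuleCat.{0} R :=
  ((Tor (ModuleCat.{0} R) i).obj (ModuleCat.of R M)).obj (ModuleCat.of R N)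

/-- Betti numbers: `b_i(M) = dim_k Tor_i^R(k, M)`, computed as a length over `R`. -/
noncomputable def betti [IsLocalRing R] (M : Type) [AddCommGroup M] [Module R M] (i : ℕ) : ℕ :=
  len R (torM R i (ResidueField R) M)

/-- `N` is (isomorphic to) the `j`-th syzygy of `M` in a minimal free resolution. -/
noncomputable def IsMinSyzygy [IsLocalRing R] : ℕ → ModuleCat.{0} R → ModuleCat.{0} R → Prop
  | 0, M, N => Nonempty (N ≃ₗ[R] M)
  | (j+1), M, N => ∃ P : ModuleCat.{0} R, IsMinSyzygy j M P ∧
      ∃ (n : ℕ) (f : (Fin n → R) →ₗ[R] P), Function.Surjective f ∧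
        LinearMap.ker f ≤ maximalIdeal R • (⊤ : Submodule R (Fin n → R)) ∧
        Nonempty (N ≃ₗ[R] LinearMap.ker f)

/-- The socle of a module: elements killed by the maximal ideal. -/
noncomputable def socle [IsLocalRing R] (M : Type) [AddCommGroup M] [Module R M] :
    Submodule R M :=
  ⨅ a ∈ maximalIdeal R, LinearMap.ker (LinearMap.lsmul R M a)

/-- `k` is a direct summand of `M`. -/
def ResidueFieldSummand [IsLocalRing R] (M : Type) [AddCommGroup M] [Module R M] : Prop :=
  ∃ (f : ResidueField R →ₗ[R] M) (g : M →ₗ[R] ResidueField R), g.comp f = LinearMap.id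

/-- `N` has infinite projective dimension: no minimal syzygy of `N` is free. -/
def InfiniteProjDim [IsLocalRing R] (N : Type) [AddCommGroup N] [Module R N] : Prop :=
  ¬ ∃ (n : ℕ) (S : ModuleCat.{0} R), IsMinSyzygy R n (ModuleCat.of R N) S ∧ Module.Free R S

/-- `ω` is a dualizing (canonical) module of the Artinian local ring `R`. -/
def IsDualizing [IsLocalRing R] (ω : Type) [AddCommGroup ω] [Module R ω] : Prop :=
  Module.Finite R ω ∧ Module.Injective R ω ∧ len R ↥(socle R ω) = 1


section Aux

open MonoidalCategory

theorem exists_minCover [IsLocalRing R] (X : Type) [AddCommGroup X] [Module R X]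
    [Module.Finite R X] :
    ∃ (n : ℕ) (f : (Fin n → R) →ₗ[R] X), Function.Surjective f ∧
      LinearMap.ker f ≤ maximalIdeal R • (⊤ : Submodule R (Fin n → R)) := by
  classical
  set k := ResidueField R
  set Q := X ⧸ (maximalIdeal R • (⊤ : Submodule R X)) with hQ
  letI : Module k Q := (inferInstance : Module (R ⧸ maximalIdeal R) Q)
  letI : IsScalarTower R k Q := (inferInstance : IsScalarTower R (R ⧸ maximalIdeal R) Q)
  haveI : Module.Finite k Q := Module.Finite.of_restrictScalars_finite R k Q
  set d := Module.finrank k Q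
  set b : Module.Basis (Fin d) k Q := Module.finBasis k Q
  have hx : ∀ i, ∃ y : X, Submodule.Quotient.mk y = b i :=
    fun i => Submodule.Quotient.mk_surjective _ (b i)
  choose x hxs using hx
  refine ⟨d, Fintype.linearCombination R x, ?_, ?_⟩
  · rw [← LinearMap.range_eq_top, Fintype.range_linearCombination]
    rw [← IsLocalRing.map_mkQ_eq_top]
    rw [Submodule.map_span]
    have : (Submodule.mkQ (maximalIdeal R • (⊤ : Submodule R X))) '' Set.range x
        = Set.range b := by
      ext q; constructor
      · rintro ⟨_, ⟨i, rfl⟩, rfl⟩; exact ⟨i, (hxs i).symm ▸ rfl⟩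
      · rintro ⟨i, rfl⟩; exact ⟨x i, ⟨i, rfl⟩, hxs i⟩
    rw [this, ← Submodule.restrictScalars_span R k Ideal.Quotient.mk_surjective,
      b.span_eq]
    rfl
  · intro c hc
    have h0 : ∑ i, (algebraMap R k (c i)) • b i = 0 := by
      have : Submodule.Quotient.mk (p := maximalIdeal R • (⊤ : Submodule R X))
          (Fintype.linearCombination R x c) = 0 := by
        rw [LinearMap.mem_ker.mp hc]; rfl
      rw [Fintype.linearCombination_apply] at this
      rw [← this]
      simp only [algebraMap_smul]
      rw [← Submodule.mkQ_apply, map_sum]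
      congr 1; ext i
      rw [Submodule.mkQ_apply, Submodule.Quotient.mk_smul, hxs i]
    have hm : ∀ i, c i ∈ maximalIdeal R := by
      intro i
      have := Fintype.linearIndependent_iff.mp b.linearIndependent
        (fun i => algebraMap R k (c i)) h0 i
      rwa [← Ideal.Quotient.eq_zero_iff_mem]
    have : c = ∑ i, c i • fun j => if i = j then (1:R) else 0 := pi_eq_sum_univ c
    rw [this]
    exact Submodule.sum_mem _ fun i _ =>
      Submodule.smul_mem_smul (hm i) Submodule.mem_top

structure FinMod where
  X : Type
  [iAdd : AddCommGroup X]
  [iMod : Module R X]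
  [iFin : Module.Finite R X]

attribute [instance] FinMod.iAdd FinMod.iMod FinMod.iFin

variable [IsLocalRing R] [IsNoetherianRing R]

noncomputable def covN (A : FinMod R) : ℕ := (exists_minCover R A.X).choose

noncomputable def covF (A : FinMod R) : (Fin (covN R A) → R) →ₗ[R] A.X :=
  (exists_minCover R A.X).choose_spec.choose

omit [IsNoetherianRing R] in
theorem covF_surj (A : FinMod R) : Function.Surjective (covF R A) :=
  (exists_minCover R A.X).choose_spec.choose_spec.1

omit [IsNoetherianRing R] in
theorem covF_min (A : FinMod R) :
    LinearMap.ker (covF R A) ≤ maximalIdeal R • (⊤ : Submodule R (Fin (covN R A) → R)) :=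
  (exists_minCover R A.X).choose_spec.choose_spec.2

noncomputable def nextMod (A : FinMod R) : FinMod R :=
  letI : IsNoetherian R (Fin (covN R A) → R) :=
    isNoetherian_of_isNoetherianRing_of_finite R _
  { X := LinearMap.ker (covF R A),
    iFin := Module.Finite.iff_fg.mpr (IsNoetherian.noetherian _) }

noncomputable def syzMod (A : FinMod R) : ℕ → FinMod R
  | 0 => A
  | (t+1) => nextMod R (syzMod A t)

/-- free module at level t of the minimal resolution -/
noncomputable def PX (A : FinMod R) (t : ℕ) : ModuleCat.{0} R :=
  ModuleCat.of R (Fin (covN R (syzMod R A t)) → R)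

/-- differential -/
noncomputable def dMap (A : FinMod R) (t : ℕ) : PX R A (t+1) ⟶ PX R A t :=
  ModuleCat.ofHom ((LinearMap.ker (covF R (syzMod R A t))).subtype ∘ₗ
    (covF R (syzMod R A (t+1)) :
      (Fin (covN R (syzMod R A (t+1))) → R) →ₗ[R] LinearMap.ker (covF R (syzMod R A t))))

theorem dMap_sq (A : FinMod R) (t : ℕ) : dMap R A (t+1) ≫ dMap R A t = 0 := by
  ext v
  show (LinearMap.ker (covF R (syzMod R A t))).subtype
      (covF R (syzMod R A (t+1)) ((covF R (syzMod R A (t+2)) v).1)) = (0 : Fin (covN R (syzMod R A t)) → R)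
  rw [LinearMap.mem_ker.mp (covF R (syzMod R A (t+2)) v).2]
  simp
  rfl

theorem range_dMap (A : FinMod R) (t : ℕ) :
    LinearMap.range (dMap R A t).hom = LinearMap.ker (covF R (syzMod R A t)) := by
  show LinearMap.range ((LinearMap.ker (covF R (syzMod R A t))).subtype ∘ₗ
    covF R (syzMod R A (t+1))) = _
  erw [LinearMap.range_comp, LinearMap.range_eq_top.mpr (covF_surj R (syzMod R A (t+1))),
    Submodule.map_subtype_top]

theorem ker_dMap (A : FinMod R) (t : ℕ) :
    LinearMap.ker (dMap R A t).hom = LinearMap.ker (covF R (syzMod R A (t+1))) := by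
  show LinearMap.ker ((LinearMap.ker (covF R (syzMod R A t))).subtype ∘ₗ
    covF R (syzMod R A (t+1))) = _
  erw [LinearMap.ker_comp, Submodule.ker_subtype, Submodule.comap_bot]
  rfl

/-- the minimal free resolution complex -/
noncomputable def resC (A : FinMod R) : ChainComplex (ModuleCat.{0} R) ℕ :=
  ChainComplex.of (PX R A) (dMap R A) (dMap_sq R A)

noncomputable def resπf (A : FinMod R) : (resC R A).X 0 ⟶ (ChainComplex.single₀ (ModuleCat.{0} R)).obj (ModuleCat.of R A.X) |>.X 0 :=
  ModuleCat.ofHom (covF R (syzMod R A 0))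

theorem resπf_comm (A : FinMod R) : (resC R A).d 1 0 ≫ resπf R A = 0 := by
  rw [show (resC R A).d 1 0 = dMap R A 0 from ChainComplex.of_d (PX R A) (dMap R A) 0]
  ext v
  show covF R (syzMod R A 0) ((covF R (syzMod R A 1) v).1) = 0
  exact LinearMap.mem_ker.mp (covF R (syzMod R A 1) v).2

noncomputable def resπ (A : FinMod R) :
    resC R A ⟶ (ChainComplex.single₀ (ModuleCat.{0} R)).obj (ModuleCat.of R A.X) :=
  (ChainComplex.toSingle₀Equiv _ _).symm ⟨resπf R A, resπf_comm R A⟩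

instance resC_projective (A : FinMod R) (t : ℕ) : Projective ((resC R A).X t) :=
  ModuleCat.projective_of_free (Pi.basisFun R (Fin (covN R (syzMod R A t))))

theorem resC_exactAt_succ (A : FinMod R) (n : ℕ) : (resC R A).ExactAt (n+1) := by
  rw [HomologicalComplex.exactAt_iff' _ (n+2) (n+1) n (by simp) (by simp)]
  rw [ShortComplex.moduleCat_exact_iff_range_eq_ker]
  show LinearMap.range ((resC R A).d (n+2) (n+1)).hom = LinearMap.ker ((resC R A).d (n+1) n).hom
  rw [show (resC R A).d (n+2) (n+1) = dMap R A (n+1) from ChainComplex.of_d (PX R A) (dMap R A) (n+1),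
    show (resC R A).d (n+1) n = dMap R A n from ChainComplex.of_d (PX R A) (dMap R A) n]
  exact (range_dMap R A (n+1)).trans (ker_dMap R A n).symm

/-- The minimal resolution as a ProjectiveResolution -/
noncomputable def res (A : FinMod R) : ProjectiveResolution (ModuleCat.of R A.X) where
  complex := resC R A
  π := resπ R A
  quasiIso := ⟨fun n => by
    cases n with
    | zero =>
      rw [ChainComplex.quasiIsoAt₀_iff, ShortComplex.quasiIso_iff_of_zeros']
      · have hτ : ((HomologicalComplex.shortComplexFunctor' (ModuleCat.{0} R)
            (ComplexShape.down ℕ) 1 0 0).map (resπ R A)).τ₂ = resπf R A := by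
          show (resπ R A).f 0 = resπf R A
          exact ChainComplex.toSingle₀Equiv_symm_apply_f_zero _ _
        constructor
        · rw [ShortComplex.moduleCat_exact_iff_range_eq_ker]
          show LinearMap.range ((resC R A).d 1 0).hom = LinearMap.ker
            (((HomologicalComplex.shortComplexFunctor' (ModuleCat.{0} R)
              (ComplexShape.down ℕ) 1 0 0).map (resπ R A)).τ₂).hom
          rw [hτ, show (resC R A).d 1 0 = dMap R A 0 from ChainComplex.of_d (PX R A) (dMap R A) 0]
          exact range_dMap R A 0
        · rw [hτ]
          exact (ModuleCat.epi_iff_surjective _).mpr (covF_surj R (syzMod R A 0))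
      · exact (resC R A).shape 0 0 (by simp)
      · rfl
      · rfl
    | succ n =>
      rw [quasiIsoAt_iff_exactAt' (resπ R A) (n+1) (ChainComplex.exactAt_succ_single_obj _ _)]
      exact resC_exactAt_succ R A n⟩

open MonoidalCategory

section Tensored

variable (A : FinMod R)

/-- `X ⊗ P` where `P` is the minimal resolution of `A`. -/
noncomputable def tc (X : ModuleCat.{0} R) : ChainComplex (ModuleCat.{0} R) ℕ :=
  (((tensoringLeft (ModuleCat.{0} R)).obj X).mapHomologicalComplex _).obj (resC R A)

noncomputable def tcMap {X Y : ModuleCat.{0} R} (u : X ⟶ Y) : tc R A X ⟶ tc R A Y :=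
  (NatTrans.mapHomologicalComplex ((tensoringLeft (ModuleCat.{0} R)).map u) _).app (resC R A)

theorem tcMap_id (X : ModuleCat.{0} R) : tcMap R A (𝟙 X) = 𝟙 (tc R A X) := by
  unfold tcMap
  rw [CategoryTheory.Functor.map_id, NatTrans.mapHomologicalComplex_id]
  rfl

theorem tcMap_comp {X Y Z : ModuleCat.{0} R} (u : X ⟶ Y) (v : Y ⟶ Z) :
    tcMap R A (u ≫ v) = tcMap R A u ≫ tcMap R A v := by
  unfold tcMap
  rw [CategoryTheory.Functor.map_comp, NatTrans.mapHomologicalComplex_comp]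
  rfl

/-- vanishing of homology of `X ⊗ P` passes to retracts of `X`. -/
theorem hvan_retract {X Y : ModuleCat.{0} R} (f : X ⟶ Y) (g : Y ⟶ X) (h : f ≫ g = 𝟙 X)
    (n : ℕ) (hY : Limits.IsZero ((tc R A Y).homology n)) :
    Limits.IsZero ((tc R A X).homology n) := by
  rw [Limits.IsZero.iff_id_eq_zero]
  have : 𝟙 ((tc R A X).homology n) =
      HomologicalComplex.homologyMap (tcMap R A f) n ≫
        HomologicalComplex.homologyMap (tcMap R A g) n := by
    rw [← HomologicalComplex.homologyMap_comp, ← tcMap_comp, h, tcMap_id,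
      HomologicalComplex.homologyMap_id]
  rw [this, hY.eq_of_src (HomologicalComplex.homologyMap (tcMap R A g) n) 0, Limits.comp_zero]

theorem hvan_of_equiv {X Y : ModuleCat.{0} R} (e : X ≃ₗ[R] Y) (n : ℕ)
    (hY : Limits.IsZero ((tc R A Y).homology n)) :
    Limits.IsZero ((tc R A X).homology n) := by
  refine hvan_retract R A (ModuleCat.ofHom e.toLinearMap) (ModuleCat.ofHom e.symm.toLinearMap)
    ?_ n hY
  ext x
  exact e.symm_apply_apply x

end Tensored

section Whisker

theorem whiskerLeft_eq (X : ModuleCat.{0} R) {M N : ModuleCat.{0} R} (u : M ⟶ N) :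
    X ◁ u = ModuleCat.ofHom (LinearMap.lTensor X u.hom) := by
  apply ModuleCat.hom_ext
  apply TensorProduct.ext'
  intro x y
  rfl

theorem whiskerRight_eq {M N : ModuleCat.{0} R} (u : M ⟶ N) (X : ModuleCat.{0} R) :
    u ▷ X = ModuleCat.ofHom (LinearMap.rTensor X u.hom) := by
  apply ModuleCat.hom_ext
  apply TensorProduct.ext'
  intro x y
  rfl

end Whisker

section FlatVanish

variable (A : FinMod R)

theorem funExact_dMap (t : ℕ) :
    Function.Exact (dMap R A (t+1)) (dMap R A t) := by
  rw [LinearMap.exact_iff]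
  rw [ker_dMap, ← range_dMap]

theorem tc_d_eq (X : ModuleCat.{0} R) (t : ℕ) :
    (tc R A X).d (t+1) t = ModuleCat.ofHom (LinearMap.lTensor X (dMap R A t).hom) := by
  show ((tensoringLeft (ModuleCat.{0} R)).obj X).map ((resC R A).d (t+1) t) = _
  rw [show (resC R A).d (t+1) t = dMap R A t from ChainComplex.of_d (PX R A) (dMap R A) t]
  exact whiskerLeft_eq R X (dMap R A t)

theorem tc_flat_exactAt (X : ModuleCat.{0} R) [Module.Flat R X] (n : ℕ) :
    (tc R A X).ExactAt (n+1) := by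
  rw [HomologicalComplex.exactAt_iff' _ (n+2) (n+1) n (by simp) (by simp)]
  rw [ShortComplex.ShortExact.moduleCat_exact_iff_function_exact]
  show Function.Exact ((tc R A X).d (n+2) (n+1)).hom ((tc R A X).d (n+1) n).hom
  rw [tc_d_eq, tc_d_eq]
  exact Module.Flat.lTensor_exact X (funExact_dMap R A n)

theorem tc_flat_isZero_homology (X : ModuleCat.{0} R) [Module.Flat R X] (n : ℕ) (hn : 1 ≤ n) :
    Limits.IsZero ((tc R A X).homology n) := by
  obtain ⟨m, rfl⟩ : ∃ m, n = m + 1 := ⟨n - 1, by omega⟩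
  exact (HomologicalComplex.exactAt_iff_isZero_homology _ _).mp (tc_flat_exactAt R A X m)

end FlatVanish

section Residue

variable (A : FinMod R)

/-- tensoring a map with range in `m•⊤` with the residue field kills it -/
theorem lTensor_res_zero {M N : Type} [AddCommGroup M] [AddCommGroup N] [Module R M]
    [Module R N] (u : M →ₗ[R] N)
    (hu : LinearMap.range u ≤ maximalIdeal R • (⊤ : Submodule R N)) :
    LinearMap.lTensor (ResidueField R) u = 0 := by
  apply TensorProduct.ext'
  intro x y
  rw [LinearMap.lTensor_tmul, LinearMap.zero_apply]
  have hm : u y ∈ maximalIdeal R • (⊤ : Submodule R N) := hu ⟨y, rfl⟩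
  refine Submodule.smul_induction_on hm ?_ ?_
  · intro r hr n _
    rw [TensorProduct.tmul_smul, TensorProduct.smul_tmul', show r • x = 0 from ?_,
      TensorProduct.zero_tmul]
    rw [Algebra.smul_def, show algebraMap R (ResidueField R) r = 0 from
      Ideal.Quotient.eq_zero_iff_mem.mpr hr, zero_mul]
  · intro a b ha hb
    rw [TensorProduct.tmul_add, ha, hb, add_zero]

theorem range_resC_d (i j : ℕ) :
    LinearMap.range ((resC R A).d i j).hom ≤
      maximalIdeal R • (⊤ : Submodule R ((resC R A).X j)) := by
  by_cases h : j + 1 = i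
  · subst h
    rw [show (resC R A).d (j+1) j = dMap R A j from ChainComplex.of_d (PX R A) (dMap R A) j]
    erw [range_dMap]
    exact covF_min R _
  · intro x hx
    obtain ⟨y, rfl⟩ := hx
    rw [(resC R A).shape i j (fun hr => h hr)]
    exact Submodule.zero_mem _

theorem tc_res_d_zero (i j : ℕ) :
    (tc R A (ModuleCat.of R (ResidueField R))).d i j = 0 := by
  show ((tensoringLeft (ModuleCat.{0} R)).obj (ModuleCat.of R (ResidueField R))).map
    ((resC R A).d i j) = 0
  rw [show ((tensoringLeft (ModuleCat.{0} R)).obj (ModuleCat.of R (ResidueField R))).map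
      ((resC R A).d i j) = ModuleCat.ofHom (LinearMap.lTensor (ResidueField R)
      ((resC R A).d i j).hom) from whiskerLeft_eq R _ _]
  rw [lTensor_res_zero R _ (range_resC_d R A i j)]
  rfl

/-- homology of `k ⊗ P` is `k ⊗ P_n`, which is nonzero when the syzygy is nonzero -/
theorem tc_res_homology_not_isZero (n : ℕ) (hnt : Nontrivial ((syzMod R A n).X)) :
    ¬ Limits.IsZero ((tc R A (ModuleCat.of R (ResidueField R))).homology n) := by
  intro h
  set K := tc R A (ModuleCat.of R (ResidueField R))
  have h1 : (K.sc n).f = 0 := tc_res_d_zero R A _ _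
  have h2 : (K.sc n).g = 0 := tc_res_d_zero R A _ _
  have e := (ShortComplex.LeftHomologyData.ofZeros (K.sc n) h1 h2).homologyIso
  have hX2 : Limits.IsZero ((K.sc n).X₂) := by
    refine Limits.IsZero.of_iso h ?_
    exact ((ShortComplex.LeftHomologyData.ofZeros (K.sc n) h1 h2).homologyIso).symm
  -- X₂ is `k ⊗ (Fin b → R)`
  have hsub : Subsingleton ((ResidueField R) ⊗[R] (Fin (covN R (syzMod R A n)) → R)) := by
    have : Subsingleton ((K.sc n).X₂) := by
      have e2 : ((K.sc n).X₂ : Type) ≃ₗ[R] PUnit :=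
        (hX2.iso (ModuleCat.isZero_of_subsingleton (ModuleCat.of R PUnit))).toLinearEquiv
      exact e2.toEquiv.subsingleton
    exact this
  have : Subsingleton (Fin (covN R (syzMod R A n)) → R) :=
    IsLocalRing.subsingleton_tensorProduct.mp hsub
  have : Subsingleton ((syzMod R A n).X) := (covF_surj R (syzMod R A n)).subsingleton
  exact (not_subsingleton_iff_nontrivial.mpr hnt) this

end Residue

section Step

variable (A : FinMod R)

theorem tcMap_f {X Y : ModuleCat.{0} R} (w : X ⟶ Y) (t : ℕ) :
    (tcMap R A w).f t = ModuleCat.ofHom (LinearMap.rTensor ((resC R A).X t) w.hom) := by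
  show w ▷ ((resC R A).X t) = _
  exact whiskerRight_eq R w _

theorem step {X₃ : ModuleCat.{0} R} (nn : ℕ) (f : (Fin nn → R) →ₗ[R] X₃)
    (hf : Function.Surjective f) (m : ℕ) (hm : 1 ≤ m)
    (h3 : Limits.IsZero ((tc R A X₃).homology (m+1))) :
    Limits.IsZero ((tc R A (ModuleCat.of R (LinearMap.ker f))).homology m) := by
  have huv : ModuleCat.ofHom ((LinearMap.ker f).subtype) ≫ ModuleCat.ofHom f = 0 := by
    ext x
    exact x.2
  have htczero : tcMap R A (ModuleCat.ofHom ((LinearMap.ker f).subtype)) ≫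
      tcMap R A (ModuleCat.ofHom f) = 0 := by
    rw [← tcMap_comp, huv]
    apply HomologicalComplex.hom_ext
    intro t
    rw [tcMap_f, ModuleCat.hom_zero, LinearMap.rTensor_zero]
    simp
    rfl
  set SC : ShortComplex (HomologicalComplex (ModuleCat.{0} R) (ComplexShape.down ℕ)) :=
    ShortComplex.mk (tcMap R A (ModuleCat.ofHom ((LinearMap.ker f).subtype)))
      (tcMap R A (ModuleCat.ofHom f)) htczero with hSCdef
  have hSC : SC.ShortExact := by
    apply HomologicalComplex.shortExact_of_degreewise_shortExact
    intro t
    haveI ft : Module.Flat R ((resC R A).X t) :=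
      (inferInstance : Module.Flat R (Fin (covN R (syzMod R A t)) → R))
    exact
      { exact := by
          rw [ShortComplex.ShortExact.moduleCat_exact_iff_function_exact]
          show Function.Exact ((tcMap R A (ModuleCat.ofHom ((LinearMap.ker f).subtype))).f t).hom
            ((tcMap R A (ModuleCat.ofHom f)).f t).hom
          rw [tcMap_f, tcMap_f]
          exact Module.Flat.rTensor_exact ((resC R A).X t) (LinearMap.exact_subtype_ker_map f)
        mono_f := by
          rw [show (SC.map (HomologicalComplex.eval _ _ t)).f =
            (tcMap R A (ModuleCat.ofHom ((LinearMap.ker f).subtype))).f t from rfl]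
          refine (ModuleCat.mono_iff_injective _).mpr ?_
          rw [tcMap_f]
          exact Module.Flat.rTensor_preserves_injective_linearMap _
            (Submodule.injective_subtype _)
        epi_g := by
          rw [show (SC.map (HomologicalComplex.eval _ _ t)).g =
            (tcMap R A (ModuleCat.ofHom f)).f t from rfl]
          refine (ModuleCat.epi_iff_surjective _).mpr ?_
          rw [tcMap_f]
          exact LinearMap.rTensor_surjective _ hf }
  have hrel : (ComplexShape.down ℕ).Rel (m+1) m := rfl
  have hex := hSC.homology_exact₁ (m+1) m hrel
  haveI : Module.Flat R ↑(ModuleCat.of R (Fin nn → R)) :=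
    (inferInstance : Module.Flat R (Fin nn → R))
  have hmid := tc_flat_isZero_homology R A (ModuleCat.of R (Fin nn → R)) m hm
  refine hex.isZero_X₂ ?_ ?_
  · exact h3.eq_of_src _ 0
  · exact hmid.eq_of_tgt _ 0

end Step

section Main

variable (A : FinMod R)

theorem isMinSyzygy_syzMod (t : ℕ) :
    IsMinSyzygy R t (ModuleCat.of R A.X) (ModuleCat.of R (syzMod R A t).X) := by
  induction t with
  | zero => exact ⟨LinearEquiv.refl _ _⟩
  | succ t ih =>
    exact ⟨ModuleCat.of R (syzMod R A t).X, ih, covN R (syzMod R A t), covF R (syzMod R A t),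
      covF_surj R _, covF_min R _, ⟨LinearEquiv.refl _ _⟩⟩

theorem syz_vanish (M' : ModuleCat.{0} R) (i : ℕ)
    (hM : Limits.IsZero ((tc R A M').homology i)) :
    ∀ j, j < i → ∀ S : ModuleCat.{0} R, IsMinSyzygy R j M' S →
      Limits.IsZero ((tc R A S).homology (i - j)) := by
  intro j
  induction j with
  | zero =>
    intro _ S hS
    obtain ⟨e⟩ := hS
    rw [Nat.sub_zero]
    exact hvan_of_equiv R A e i hM
  | succ j ih =>
    intro hj S hS
    obtain ⟨P', hP', n, f, hfs, hfmin, ⟨e⟩⟩ := hS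
    have hP'van := ih (by omega) P' hP'
    have harith : i - j = (i - (j+1)) + 1 := by omega
    rw [harith] at hP'van
    have hker := step R A n f hfs (i - (j+1)) (by omega) hP'van
    exact hvan_of_equiv R A e (i - (j+1)) hker

end Main

end Aux

theorem stmt1 [IsLocalRing R] [IsNoetherianRing R]
    (M N : Type) [AddCommGroup M] [Module R M] [AddCommGroup N] [Module R N]
    [Module.Finite R M] [Module.Finite R N]
    (hN : InfiniteProjDim R N)
    (i : ℕ) (hi : 0 < i) (htor : Subsingleton (torM R i M N)) :
    ∀ j < i, ∀ S : ModuleCat.{0} R, IsMinSyzygy R j (ModuleCat.of R M) S →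
      ¬ ResidueFieldSummand R S := by
  intro j hj S hsyz hsummand
  obtain ⟨f, g, hgf⟩ := hsummand
  set A : FinMod R := { X := N } with hA
  have h0 : Limits.IsZero (torM R i M N) := ModuleCat.isZero_of_subsingleton _
  have hM : Limits.IsZero ((tc R A (ModuleCat.of R M)).homology i) := by
    refine h0.of_iso ?_
    exact ((res R A).isoLeftDerivedObj
      ((MonoidalCategory.tensoringLeft (ModuleCat.{0} R)).obj (ModuleCat.of R M)) i).symm
  have hS := syz_vanish R A (ModuleCat.of R M) i hM j hj S hsyz
  have hcomp : ModuleCat.ofHom f ≫ ModuleCat.ofHom g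
      = 𝟙 (ModuleCat.of R (ResidueField R)) := by
    rw [← ModuleCat.ofHom_comp, hgf, ModuleCat.ofHom_id]
  have hk := hvan_retract R A (ModuleCat.ofHom f) (ModuleCat.ofHom g) hcomp (i-j) hS
  refine tc_res_homology_not_isZero R A (i-j) ?_ hk
  by_contra hnt
  rw [not_nontrivial_iff_subsingleton] at hnt
  haveI : Subsingleton ↑(ModuleCat.of R ((syzMod R A (i-j)).X)) := hnt
  exact hN ⟨i-j, ModuleCat.of R ((syzMod R A (i-j)).X), isMinSyzygy_syzMod R A (i-j),
    Module.Free.of_subsingleton R _⟩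
end

section
/- Let R be a commutative local ring and 0 → N →^φ R^n →^ψ M → 0 a short exact sequence of R-modules with M faithful. Then the induced map Λ^n_R(φ) : Λ^n_R(N) → Λ^n_R(R^n) ≅ R is zero. -/
open CategoryTheory IsLocalRing TensorProduct

variable (R : Type) [CommRing R]

variable {R' : Type} [CommRing R'] in
theorem aux_alt {M N : Type*} [AddCommGroup M] [Module R' M] [AddCommGroup N] [Module R' N]
    {ι : Type*} [Fintype ι] [DecidableEq ι] (e : Module.Basis ι R' M) (f : M [⋀^ι]→ₗ[R'] N)
    (v : ι → M) : f v = e.det v • f e := by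
  have h : f = (LinearMap.toSpanSingleton R' N (f e)).compAlternatingMap e.det := by
    refine Module.Basis.ext_alternating e fun i h => ?_
    let σ : Equiv.Perm ι := Equiv.ofBijective i (Finite.injective_iff_bijective.1 h)
    change f (e ∘ σ) = _
    have h2 : e.det (e ∘ σ) = Equiv.Perm.sign σ • e.det e := e.det.map_perm e σ
    simp only [LinearMap.compAlternatingMap_apply, LinearMap.toSpanSingleton_apply]
    change _ = e.det (e ∘ σ) • f e
    rw [h2, Module.Basis.det_self, f.map_perm]
    simp
  rw [h]
  simp [LinearMap.toSpanSingleton_apply, Module.Basis.det_self]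

variable {R' : Type} [CommRing R'] in
theorem aux_det {M : Type*} [AddCommGroup M] [Module R' M] {n : ℕ}
    (ψ : (Fin n → R') →ₗ[R'] M) (hψ : Function.Surjective ψ) [FaithfulSMul R' M]
    (w : Fin n → (Fin n → R')) (hw : ∀ j, ψ (w j) = 0) :
    (Pi.basisFun R' (Fin n)).det w = 0 := by
  set A : Matrix (Fin n) (Fin n) R' := Matrix.of fun i j => w j i with hA
  have hdet : (Pi.basisFun R' (Fin n)).det w = A.det := by
    rw [Module.Basis.det_apply]
    congr 1
  rw [hdet]
  have hz : ∀ m : M, A.det • m = (0:R') • m := by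
    intro m
    obtain ⟨b, rfl⟩ := hψ m
    rw [zero_smul]
    have key : A.det • b = ∑ j, (A.cramer b j) • w j := by
      have := A.mulVec_cramer b
      rw [← this]
      ext i
      simp [Matrix.mulVec, dotProduct, A, Finset.sum_apply, mul_comm]
    calc A.det • ψ b = ψ (A.det • b) := (map_smul ψ _ _).symm
      _ = ψ (∑ j, (A.cramer b j) • w j) := by rw [key]
      _ = ∑ j, (A.cramer b j) • ψ (w j) := by simp
      _ = 0 := by simp [hw]
  exact FaithfulSMul.eq_of_smul_eq_smul hz

theorem stmt18 [IsLocalRing R]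
    (M N : Type) [AddCommGroup M] [Module R M] [AddCommGroup N] [Module R N]
    (n : ℕ)
    (φ : N →ₗ[R] (Fin n → R)) (ψ : (Fin n → R) →ₗ[R] M)
    (hφ : Function.Injective φ) (hψ : Function.Surjective ψ)
    (hexact : LinearMap.ker ψ = LinearMap.range φ)
    (hfaithful : FaithfulSMul R M) :
    ∀ x ∈ (⋀[R]^n N : Submodule R (ExteriorAlgebra R N)),
      ExteriorAlgebra.map φ x = 0 := by
  intro x hx
  rw [← ExteriorAlgebra.ιMulti_span_fixedDegree] at hx
  induction hx using Submodule.span_induction with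
  | mem y hy =>
    obtain ⟨v, rfl⟩ := hy
    rw [ExteriorAlgebra.map_apply_ιMulti]
    have hdet : (Pi.basisFun R (Fin n)).det (φ ∘ v) = 0 := by
      refine aux_det ψ hψ (φ ∘ v) fun j => ?_
      have : φ (v j) ∈ LinearMap.ker ψ := by
        rw [hexact]; exact LinearMap.mem_range_self _ _
      exact this
    rw [aux_alt (Pi.basisFun R (Fin n)) (ExteriorAlgebra.ιMulti R n) (φ ∘ v), hdet, zero_smul]
  | zero => simp
  | add a b _ _ ha hb => rw [map_add, ha, hb, add_zero]
  | smul r a _ ha => rw [map_smul, ha, smul_zero]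
end
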